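/- Let R be a commutative ring that is also a ℚ-algebra, n ≥ 1, A an n×n matrix over R with A^a = 0 for some natural number a, and x ∈ R with x^b = 0 for some natural number b. Then for every natural number N ≥ a + b, ∑_{m=0}^{N} (1/m!)·trace((A + x • 1)^m) = (∑_{m=0}^{N} (1/m!)·trace(A^m)) · (∑_{r=0}^{N} (1/r!)·x^r), where trace of the 0-th power is n·1_R. -/

import Mathlib

open scoped BigOperators

/-- Let `R` be a commutative ring that is also a `ℚ`-algebra, `n ≥ 1`,
`A` an `n×n` matrix over `R` with `A^a = 0`, and `x ∈ R` with `x^b = 0`.  Then for every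
natural number `N ≥ a + b`,
`∑_{m=0}^{N} (1/m!)·trace((A + x • 1)^m)
    = (∑_{m=0}^{N} (1/m!)·trace(A^m)) · (∑_{r=0}^{N} (1/r!)·x^r)`,
where the trace of the `0`-th power is `n·1_R`. -/
theorem sum_inv_factorial_trace_pow_add_scalar_smul_one
    {R : Type*} [CommRing R] [Algebra ℚ R] {n : ℕ} (hn : 1 ≤ n)
    (A : Matrix (Fin n) (Fin n) R) (x : R) (a b : ℕ)
    (hA : A ^ a = 0) (hx : x ^ b = 0) (N : ℕ) (hN : a + b ≤ N) :
    ∑ m ∈ Finset.range (N + 1),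
        ((Nat.factorial m : ℚ)⁻¹) • Matrix.trace ((A + x • (1 : Matrix (Fin n) (Fin n) R)) ^ m)
      = (∑ m ∈ Finset.range (N + 1), ((Nat.factorial m : ℚ)⁻¹) • Matrix.trace (A ^ m))
        * (∑ r ∈ Finset.range (N + 1), ((Nat.factorial r : ℚ)⁻¹) • x ^ r) := by
  classical
  set g : ℕ → ℕ → R := fun k r =>
    ((Nat.factorial k : ℚ)⁻¹ * (Nat.factorial r : ℚ)⁻¹) • (x ^ r * Matrix.trace (A ^ k)) with hg
  -- vanishing of terms with k + r > N
  have hg0 : ∀ k r : ℕ, N < k + r → g k r = 0 := by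
    intro k r h
    rcases le_or_gt a k with hk | hk
    · have hAk : A ^ k = 0 := by
        rw [← Nat.add_sub_cancel' hk, pow_add, hA, zero_mul]
      simp [hg, hAk]
    · have hr : b ≤ r := by omega
      have hxr : x ^ r = 0 := by
        rw [← Nat.add_sub_cancel' hr, pow_add, hx, zero_mul]
      simp [hg, hxr]
  have hcomm : Commute A (x • (1 : Matrix (Fin n) (Fin n) R)) := by
    unfold Commute SemiconjBy
    rw [mul_smul_comm, smul_mul_assoc, mul_one, one_mul]
  -- expand each term of LHS via the binomial theorem
  have key : ∀ m : ℕ, ((Nat.factorial m : ℚ)⁻¹) •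
      Matrix.trace ((A + x • (1 : Matrix (Fin n) (Fin n) R)) ^ m)
      = ∑ k ∈ Finset.range (m + 1), g k (m - k) := by
    intro m
    rw [hcomm.add_pow]
    rw [Matrix.trace_sum, Finset.smul_sum]
    refine Finset.sum_congr rfl ?_
    intro k hk
    have hkm : k ≤ m := Nat.lt_succ_iff.mp (Finset.mem_range.mp hk)
    have h1 : (x • (1 : Matrix (Fin n) (Fin n) R)) ^ (m - k) = x ^ (m - k) • 1 := by
      rw [smul_pow, one_pow]
    rw [h1]
    have h2 : A ^ k * (x ^ (m - k) • (1 : Matrix (Fin n) (Fin n) R)) * ((m.choose k : ℕ) : Matrix (Fin n) (Fin n) R)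
        = (m.choose k : ℕ) • (x ^ (m - k) • A ^ k) := by
      rw [mul_smul_comm, mul_one, (Nat.commute_cast (x ^ (m - k) • A ^ k) (m.choose k)).eq,
        ← nsmul_eq_mul]
    rw [h2, Matrix.trace_smul, Matrix.trace_smul, ← Nat.cast_smul_eq_nsmul ℚ, smul_smul]
    have hcoef : ((Nat.factorial m : ℚ)⁻¹) * (m.choose k : ℚ)
        = (Nat.factorial k : ℚ)⁻¹ * (Nat.factorial (m - k) : ℚ)⁻¹ := by
      rw [Nat.cast_choose ℚ hkm]
      have h3 : (Nat.factorial m : ℚ) ≠ 0 := Nat.cast_ne_zero.mpr (Nat.factorial_ne_zero m)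
      have h4 : (Nat.factorial k : ℚ) ≠ 0 := Nat.cast_ne_zero.mpr (Nat.factorial_ne_zero k)
      have h5 : (Nat.factorial (m - k) : ℚ) ≠ 0 := Nat.cast_ne_zero.mpr (Nat.factorial_ne_zero _)
      field_simp
    rw [hcoef]
    simp only [hg]
    rw [smul_eq_mul]
  calc
    ∑ m ∈ Finset.range (N + 1),
        ((Nat.factorial m : ℚ)⁻¹) • Matrix.trace ((A + x • (1 : Matrix (Fin n) (Fin n) R)) ^ m)
        = ∑ m ∈ Finset.range (N + 1), ∑ k ∈ Finset.range (m + 1), g k (m - k) := by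
          exact Finset.sum_congr rfl fun m _ => key m
    _ = ∑ k ∈ Finset.range (N + 1), ∑ m ∈ Finset.Ico k (N + 1), g k (m - k) := by
          simp only [Finset.range_eq_Ico]
          exact (Finset.sum_Ico_Ico_comm 0 (N + 1) fun k m => g k (m - k)).symm
    _ = ∑ k ∈ Finset.range (N + 1), ∑ r ∈ Finset.range (N + 1 - k), g k r := by
          refine Finset.sum_congr rfl fun k hk => ?_
          rw [Finset.sum_Ico_eq_sum_range]
          exact Finset.sum_congr rfl fun r _ => by rw [Nat.add_sub_cancel_left]
    _ = ∑ k ∈ Finset.range (N + 1), ∑ r ∈ Finset.range (N + 1), g k r := by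
          refine Finset.sum_congr rfl fun k hk => ?_
          have hkN : k ≤ N := Nat.lt_succ_iff.mp (Finset.mem_range.mp hk)
          refine Finset.sum_subset ?_ ?_
          · exact Finset.range_subset_range.mpr (by omega)
          · intro r hr hr'
            have h1 : N + 1 - k ≤ r := by
              simp only [Finset.mem_range, not_lt] at hr'
              exact hr'
            exact hg0 k r (by omega)
    _ = (∑ m ∈ Finset.range (N + 1), ((Nat.factorial m : ℚ)⁻¹) • Matrix.trace (A ^ m))
        * (∑ r ∈ Finset.range (N + 1), ((Nat.factorial r : ℚ)⁻¹) • x ^ r) := by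
          rw [Finset.sum_mul_sum]
          refine Finset.sum_congr rfl fun k _ => Finset.sum_congr rfl fun r _ => ?_
          rw [smul_mul_smul_comm, mul_comm (Matrix.trace (A ^ k)) (x ^ r)]
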